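/- Let A be the graded ℝ-algebra generated by elements α_{ij} (1 ≤ i < j ≤ m) in a single degree d ≥ 1, with relations α_{ij}² = 0, α_{ij}α_{kl} = (−1)^d α_{kl}α_{ij} for {i,j} ≠ {k,l}, and α_{ij}α_{jk} − α_{ik}α_{jk} − α_{ij}α_{ik} = 0 for i < j < k (the three-term relation). Then the set of products α_{i_1 j_1}⋯α_{i_k j_k} with i_ℓ < j_ℓ for all ℓ and i_1 < i_2 < ⋯ < i_k forms a linear basis of A. -/

import Mathlib

noncomputable section

/-!
STATEMENT 4: Let `A` be the graded ℝ-algebra generated by `α_{ij}` (`1 ≤ i < j ≤ m`) in a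
single degree `d ≥ 1`, with relations `α_{ij}² = 0`,
`α_{ij}α_{kl} = (−1)^d α_{kl}α_{ij}` for `{i,j} ≠ {k,l}`, and the three-term relation
`α_{ij}α_{jk} − α_{ik}α_{jk} − α_{ij}α_{ik} = 0` for `i < j < k`.  Then the products
`α_{i_1 j_1}⋯α_{i_k j_k}` with `i_ℓ < j_ℓ` and `i_1 < i_2 < ⋯ < i_k` form a linear basis
of `A` (a Poincaré–Birkhoff–Witt basis).
-/

/-- Index set of the generators `α_{ij}` with `i < j`. -/
abbrev OrdIdx (m : ℕ) := {p : Fin m × Fin m // p.1 < p.2}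

/-- The quadratic relations. -/
inductive PBWRel (m d : ℕ) :
    FreeAlgebra ℝ (OrdIdx m) → FreeAlgebra ℝ (OrdIdx m) → Prop
  | sq (p : OrdIdx m) :
      PBWRel m d (FreeAlgebra.ι ℝ p * FreeAlgebra.ι ℝ p) 0
  | comm (p q : OrdIdx m) (h : p ≠ q) :
      PBWRel m d (FreeAlgebra.ι ℝ p * FreeAlgebra.ι ℝ q)
        (((-1 : ℝ) ^ d) • (FreeAlgebra.ι ℝ q * FreeAlgebra.ι ℝ p))
  | threeTerm (i j k : Fin m) (hij : i < j) (hjk : j < k) :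
      PBWRel m d
        (FreeAlgebra.ι ℝ (⟨(i, j), hij⟩ : OrdIdx m) * FreeAlgebra.ι ℝ (⟨(j, k), hjk⟩ : OrdIdx m)
          - FreeAlgebra.ι ℝ (⟨(i, k), lt_trans hij hjk⟩ : OrdIdx m)
              * FreeAlgebra.ι ℝ (⟨(j, k), hjk⟩ : OrdIdx m)
          - FreeAlgebra.ι ℝ (⟨(i, j), hij⟩ : OrdIdx m)
              * FreeAlgebra.ι ℝ (⟨(i, k), lt_trans hij hjk⟩ : OrdIdx m))
        0

/-- The quadratic algebra modeling `H^*(Conf(m, ℝ^{d+1}); ℝ)`. -/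
abbrev PBWAlg (m d : ℕ) := RingQuot (PBWRel m d)

/-- The generator `α_{ij}` of the presented algebra. -/
def pbwGen (m d : ℕ) (p : OrdIdx m) : PBWAlg m d :=
  RingQuot.mkAlgHom ℝ (PBWRel m d) (FreeAlgebra.ι ℝ p)

/-- The monomial `α_{i_1 j_1} ⋯ α_{i_k j_k}` indexed by a word. -/
def pbwWordProd (m d : ℕ) (l : List (OrdIdx m)) : PBWAlg m d :=
  (l.map (pbwGen m d)).prod

/-- A word `α_{i_1 j_1}⋯α_{i_k j_k}` is admissible when `i_1 < i_2 < ⋯ < i_k`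
(each letter already satisfies `i_ℓ < j_ℓ`). -/
def AdmissibleWord (m : ℕ) (l : List (OrdIdx m)) : Prop :=
  (l.map fun p => p.1.1).Pairwise (· < ·)


namespace PBWScratch

variable {m : ℕ}

abbrev Fw (m : ℕ) := List (OrdIdx m) →₀ ℝ

def Cw (p : OrdIdx m) : Fw m →ₗ[ℝ] Fw m := Finsupp.lmapDomain ℝ ℝ (List.cons p)

@[simp] lemma Cw_single (p : OrdIdx m) (l : List (OrdIdx m)) (c : ℝ) :
    Cw p (Finsupp.single l c) = Finsupp.single (p :: l) c := by
  simp [Cw, Finsupp.lmapDomain_apply, Finsupp.mapDomain_single]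

def sg (d : ℕ) : ℝ := (-1) ^ d

lemma sg_sg (d : ℕ) (x : Fw m) : sg d • sg d • x = x := by
  rw [smul_smul, sg, ← pow_add, ← two_mul, pow_mul]
  norm_num

def Tp (d : ℕ) : OrdIdx m → List (OrdIdx m) → Fw m
  | p, [] => Finsupp.single [p] 1
  | p, q :: t =>
    if _h1 : p.1.1 < q.1.1 then Finsupp.single (p :: q :: t) 1
    else if _h2 : q.1.1 < p.1.1 then sg d • Cw q (Tp d p t)
    else if _h3 : p.1.2 = q.1.2 then 0
    else if h4 : p.1.2 < q.1.2 then
      Cw p (Tp d ⟨(p.1.2, q.1.2), h4⟩ t) - Cw q (Tp d ⟨(p.1.2, q.1.2), h4⟩ t)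
    else
      sg d • (Cw q (Tp d ⟨(q.1.2, p.1.2),
          lt_of_le_of_ne (not_lt.mp h4) fun e => _h3 e.symm⟩ t)
        - Cw p (Tp d ⟨(q.1.2, p.1.2),
          lt_of_le_of_ne (not_lt.mp h4) fun e => _h3 e.symm⟩ t))

variable {d : ℕ}

lemma Tp_nil (p : OrdIdx m) : Tp d p [] = Finsupp.single [p] 1 := rfl

lemma Tp_cons_lt {p q : OrdIdx m} (h : p.1.1 < q.1.1) (t : List (OrdIdx m)) :
    Tp d p (q :: t) = Finsupp.single (p :: q :: t) 1 := by
  rw [Tp, dif_pos h]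

lemma Tp_cons_gt {p q : OrdIdx m} (h : q.1.1 < p.1.1) (t : List (OrdIdx m)) :
    Tp d p (q :: t) = sg d • Cw q (Tp d p t) := by
  rw [Tp, dif_neg (asymm h), dif_pos h]

lemma Tp_cons_same {p q : OrdIdx m} (h1 : p.1.1 = q.1.1) (h2 : p.1.2 = q.1.2)
    (t : List (OrdIdx m)) : Tp d p (q :: t) = 0 := by
  rw [Tp, dif_neg h1.not_lt, dif_neg h1.not_gt, dif_pos h2]

lemma Tp_cons_eq_lt {p q : OrdIdx m} (h1 : p.1.1 = q.1.1) (h4 : p.1.2 < q.1.2)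
    (t : List (OrdIdx m)) :
    Tp d p (q :: t) = Cw p (Tp d ⟨(p.1.2, q.1.2), h4⟩ t)
      - Cw q (Tp d ⟨(p.1.2, q.1.2), h4⟩ t) := by
  rw [Tp, dif_neg h1.not_lt, dif_neg h1.not_gt, dif_neg h4.ne, dif_pos h4]

lemma Tp_cons_eq_gt {p q : OrdIdx m} (h1 : p.1.1 = q.1.1) (h4 : q.1.2 < p.1.2)
    (t : List (OrdIdx m)) :
    Tp d p (q :: t) = sg d • (Cw q (Tp d ⟨(q.1.2, p.1.2), h4⟩ t)
      - Cw p (Tp d ⟨(q.1.2, p.1.2), h4⟩ t)) := by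
  rw [Tp, dif_neg h1.not_lt, dif_neg h1.not_gt, dif_neg h4.ne', dif_neg h4.not_gt]

def Mo (d : ℕ) (p : OrdIdx m) : Fw m →ₗ[ℝ] Fw m :=
  Finsupp.lsum ℝ fun l => LinearMap.toSpanSingleton ℝ (Fw m) (Tp d p l)

@[simp] lemma Mo_single (p : OrdIdx m) (l : List (OrdIdx m)) (c : ℝ) :
    Mo d p (Finsupp.single l c) = c • Tp d p l := by
  simp [Mo, LinearMap.toSpanSingleton]

-- generic-letter interaction lemmas
lemma Mo_Cw_lt₀ {p q : OrdIdx m} (h : p.1.1 < q.1.1) (f : Fw m) :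
    Mo d p (Cw q f) = Cw p (Cw q f) := by
  induction f using Finsupp.induction_linear with
  | zero => simp
  | add f g hf hg => simp [map_add, hf, hg]
  | single l c => simp [Tp_cons_lt h, Finsupp.smul_single]

lemma Mo_Cw_gt₀ {p q : OrdIdx m} (h : q.1.1 < p.1.1) (f : Fw m) :
    Mo d p (Cw q f) = sg d • Cw q (Mo d p f) := by
  induction f using Finsupp.induction_linear with
  | zero => simp
  | add f g hf hg => simp only [map_add, hf, hg, smul_add]
  | single l c => rw [Cw_single, Mo_single, Tp_cons_gt h, Mo_single, map_smul,
      smul_comm c (sg d)]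

lemma Mo_Cw_same₀ (p : OrdIdx m) (f : Fw m) :
    Mo d p (Cw p f) = 0 := by
  induction f using Finsupp.induction_linear with
  | zero => simp
  | add f g hf hg => simp [map_add, hf, hg]
  | single l c => rw [Cw_single, Mo_single, Tp_cons_same rfl rfl, smul_zero]

lemma Mo_Cw_eq_lt₀ {p q : OrdIdx m} (h1 : p.1.1 = q.1.1) (h4 : p.1.2 < q.1.2) (f : Fw m) :
    Mo d p (Cw q f) = Cw p (Mo d ⟨(p.1.2, q.1.2), h4⟩ f)
      - Cw q (Mo d ⟨(p.1.2, q.1.2), h4⟩ f) := by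
  induction f using Finsupp.induction_linear with
  | zero => simp
  | add f g hf hg => simp only [map_add, hf, hg]; abel
  | single l c => rw [Cw_single, Mo_single, Tp_cons_eq_lt h1 h4, Mo_single, map_smul,
      map_smul, smul_sub]

lemma Mo_Cw_eq_gt₀ {p q : OrdIdx m} (h1 : p.1.1 = q.1.1) (h4 : q.1.2 < p.1.2) (f : Fw m) :
    Mo d p (Cw q f) = sg d • (Cw q (Mo d ⟨(q.1.2, p.1.2), h4⟩ f)
      - Cw p (Mo d ⟨(q.1.2, p.1.2), h4⟩ f)) := by
  induction f using Finsupp.induction_linear with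
  | zero => simp
  | add f g hf hg => simp only [map_add, hf, hg, smul_sub, smul_add]; abel
  | single l c => rw [Cw_single, Mo_single, Tp_cons_eq_gt h1 h4, Mo_single, map_smul,
      map_smul, smul_sub, smul_sub, smul_comm c (sg d), smul_comm c (sg d), ← smul_sub]

-- component-style versions, for syntactic rewriting
lemma Mo_Cw_lt {i a k b : Fin m} {hia : i < a} {hkb : k < b} (h : i < k) (f : Fw m) :
    Mo d ⟨(i,a),hia⟩ (Cw ⟨(k,b),hkb⟩ f) = Cw (⟨(i,a),hia⟩ : OrdIdx m) (Cw ⟨(k,b),hkb⟩ f) :=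
  Mo_Cw_lt₀ h f

lemma Mo_Cw_gt {i a k b : Fin m} {hia : i < a} {hkb : k < b} (h : k < i) (f : Fw m) :
    Mo d ⟨(i,a),hia⟩ (Cw ⟨(k,b),hkb⟩ f)
      = sg d • Cw (⟨(k,b),hkb⟩ : OrdIdx m) (Mo d ⟨(i,a),hia⟩ f) :=
  Mo_Cw_gt₀ h f

lemma Mo_Cw_same {i a : Fin m} {hia : i < a} (f : Fw m) :
    Mo d ⟨(i,a),hia⟩ (Cw ⟨(i,a),hia⟩ f) = 0 :=
  Mo_Cw_same₀ _ f

lemma Mo_Cw_eq_lt {i a b : Fin m} {hia : i < a} {hib : i < b} (hab : a < b) (f : Fw m) :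
    Mo d ⟨(i,a),hia⟩ (Cw ⟨(i,b),hib⟩ f)
      = Cw (⟨(i,a),hia⟩ : OrdIdx m) (Mo d ⟨(a,b),hab⟩ f)
        - Cw (⟨(i,b),hib⟩ : OrdIdx m) (Mo d ⟨(a,b),hab⟩ f) :=
  Mo_Cw_eq_lt₀ (p := ⟨(i,a),hia⟩) (q := ⟨(i,b),hib⟩) rfl hab f

lemma Mo_Cw_eq_gt {i a b : Fin m} {hia : i < a} {hib : i < b} (hba : b < a) (f : Fw m) :
    Mo d ⟨(i,a),hia⟩ (Cw ⟨(i,b),hib⟩ f)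
      = sg d • (Cw (⟨(i,b),hib⟩ : OrdIdx m) (Mo d ⟨(b,a),hba⟩ f)
        - Cw (⟨(i,a),hia⟩ : OrdIdx m) (Mo d ⟨(b,a),hba⟩ f)) :=
  Mo_Cw_eq_gt₀ (p := ⟨(i,a),hia⟩) (q := ⟨(i,b),hib⟩) rfl hba f

lemma Mo_nil (p : OrdIdx m) :
    Mo d p (Finsupp.single [] (1:ℝ)) = Cw p (Finsupp.single [] (1:ℝ)) := by
  rw [Mo_single, Tp_nil, one_smul, Cw_single]

end PBWScratch

namespace PBWScratch
variable {m d : ℕ}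

theorem idents (t : List (OrdIdx m)) :
    (∀ p : OrdIdx m, Mo d p (Mo d p (Finsupp.single t (1:ℝ))) = 0) ∧
    (∀ p q : OrdIdx m, Mo d p (Mo d q (Finsupp.single t (1:ℝ)))
        = sg d • Mo d q (Mo d p (Finsupp.single t (1:ℝ)))) ∧
    (∀ (i j k : Fin m) (hij : i < j) (hjk : j < k),
      Mo d ⟨(i,j),hij⟩ (Mo d ⟨(j,k),hjk⟩ (Finsupp.single t (1:ℝ)))
        = Mo d ⟨(i,k),hij.trans hjk⟩ (Mo d ⟨(j,k),hjk⟩ (Finsupp.single t (1:ℝ)))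
          + Mo d ⟨(i,j),hij⟩ (Mo d ⟨(i,k),hij.trans hjk⟩ (Finsupp.single t (1:ℝ)))) := by
  induction t with
  | nil =>
    have A1 : ∀ p : OrdIdx m,
        Mo d p (Mo d p (Finsupp.single [] (1:ℝ))) = 0 := by
      intro p; rw [Mo_nil, Mo_Cw_same₀]
    refine ⟨A1, ?_, ?_⟩
    · have key : ∀ (i a k b : Fin m) (hia : i < a) (hkb : k < b),
          (i < k ∨ (i = k ∧ a < b)) →
          Mo d ⟨(i,a),hia⟩ (Mo d ⟨(k,b),hkb⟩ (Finsupp.single [] (1:ℝ)))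
            = sg d • Mo d ⟨(k,b),hkb⟩ (Mo d ⟨(i,a),hia⟩ (Finsupp.single [] (1:ℝ))) := by
        intro i a k b hia hkb hpq
        rw [Mo_nil, Mo_nil]
        rcases hpq with h | ⟨rfl, h2⟩
        · rw [Mo_Cw_lt h, Mo_Cw_gt h, Mo_nil, sg_sg]
        · rw [Mo_Cw_eq_lt h2, Mo_Cw_eq_gt h2, sg_sg]
      intro p q
      rcases eq_or_ne p q with rfl | hne
      · rw [A1 p, smul_zero]
      obtain ⟨⟨i,a⟩,hia⟩ := p; obtain ⟨⟨k,b⟩,hkb⟩ := q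
      rcases lt_trichotomy i k with h | h | h
      · exact key i a k b hia hkb (Or.inl h)
      · subst h
        rcases lt_trichotomy a b with h2 | h2 | h2
        · exact key i a i b hia hkb (Or.inr ⟨rfl, h2⟩)
        · exact absurd (by subst h2; rfl) hne
        · rw [key i b i a hkb hia (Or.inr ⟨rfl, h2⟩), sg_sg]
      · rw [key k b i a hkb hia (Or.inl h), sg_sg]
    · intro i j k hij hjk
      rw [Mo_nil ⟨(j,k),hjk⟩, Mo_nil ⟨(i,k),hij.trans hjk⟩, Mo_Cw_lt hij, Mo_Cw_lt hij,
        Mo_Cw_eq_lt hjk, Mo_nil ⟨(j,k),hjk⟩]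
      abel
  | cons r t ih =>
    obtain ⟨ih1, ih2, ih3⟩ := ih
    obtain ⟨⟨i0, c⟩, h0⟩ := r
    set y : Fw m := Finsupp.single t (1:ℝ) with hy
    have hsingle : (Finsupp.single (⟨(i0,c),h0⟩ :: t) (1:ℝ) : Fw m)
        = Cw ⟨(i0,c),h0⟩ y := by rw [hy, Cw_single]
    rw [hsingle]
    have A1 : ∀ p : OrdIdx m, Mo d p (Mo d p (Cw ⟨(i0,c),h0⟩ y)) = 0 := by
      rintro ⟨⟨i,a⟩,hia⟩
      rcases lt_trichotomy i i0 with h | h | h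
      · rw [Mo_Cw_lt h, Mo_Cw_same₀]
      · subst h
        rcases lt_trichotomy a c with h2 | h2 | h2
        · rw [Mo_Cw_eq_lt h2, map_sub, Mo_Cw_same₀, Mo_Cw_eq_lt h2,
            ih1 ⟨(a,c),h2⟩]
          simp
        · subst h2
          rw [Mo_Cw_same₀, map_zero]
        · rw [Mo_Cw_eq_gt h2, map_smul, map_sub, Mo_Cw_same₀, Mo_Cw_eq_gt h2,
            ih1 ⟨(c,a),h2⟩]
          simp
      · rw [Mo_Cw_gt h, map_smul, Mo_Cw_gt h, ih1 ⟨(i,a),hia⟩]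
        simp
    have A2 : ∀ p q : OrdIdx m,
        Mo d p (Mo d q (Cw ⟨(i0,c),h0⟩ y))
          = sg d • Mo d q (Mo d p (Cw ⟨(i0,c),h0⟩ y)) := by
      have key : ∀ (i a k b : Fin m) (hia : i < a) (hkb : k < b),
          (i < k ∨ (i = k ∧ a < b)) →
          Mo d ⟨(i,a),hia⟩ (Mo d ⟨(k,b),hkb⟩ (Cw ⟨(i0,c),h0⟩ y))
            = sg d • Mo d ⟨(k,b),hkb⟩ (Mo d ⟨(i,a),hia⟩ (Cw ⟨(i0,c),h0⟩ y)) := by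
        intro i a k b hia hkb hpq
        have hik : i ≤ k := by
          rcases hpq with h | ⟨h, _⟩
          exacts [le_of_lt h, le_of_eq h]
        rcases lt_trichotomy i0 i with hx | hx | hx
        · -- K5 : i0 < i ≤ k, pass-through twice
          have hk : i0 < k := hx.trans_le hik
          rw [Mo_Cw_gt hk, map_smul, Mo_Cw_gt hx, Mo_Cw_gt hx, map_smul, Mo_Cw_gt hk,
            ih2 ⟨(i,a),hia⟩ ⟨(k,b),hkb⟩]
          simp only [map_smul, sg_sg]
        · -- i0 = i
          subst hx
          rcases hpq with h | ⟨rfl, hab⟩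
          · -- K4 : i = i0 < k
            rcases lt_trichotomy a c with h2 | h2 | h2
            · -- a < c, u = (a,c)
              rw [Mo_Cw_gt h, map_smul, Mo_Cw_eq_lt h2, Mo_Cw_eq_lt h2, map_sub,
                Mo_Cw_gt h, Mo_Cw_gt h, ih2 ⟨(a,c),h2⟩ ⟨(k,b),hkb⟩]
              simp only [map_smul, map_sub, smul_sub, sg_sg]
            · -- a = c : p = r
              subst h2
              rw [Mo_Cw_gt h, map_smul, Mo_Cw_same₀, Mo_Cw_same₀]
              simp
            · -- a > c, u = (c,a)
              rw [Mo_Cw_gt h, map_smul, Mo_Cw_eq_gt h2, Mo_Cw_eq_gt h2, map_smul,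
                map_sub, Mo_Cw_gt h, Mo_Cw_gt h, ih2 ⟨(c,a),h2⟩ ⟨(k,b),hkb⟩]
              simp only [map_smul, map_sub, smul_sub, sg_sg]
          · -- K6 : i = i0 = k, a < b, the interacting case
            rcases lt_trichotomy c a with h2 | h2 | h2
            · -- 5c : c < a < b
              have hcb : c < b := h2.trans hab
              rw [Mo_Cw_eq_gt hcb, map_smul, map_sub, Mo_Cw_eq_gt h2, Mo_Cw_eq_lt hab,
                Mo_Cw_eq_gt h2, map_smul, map_sub, Mo_Cw_eq_gt hcb, Mo_Cw_eq_gt hab,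
                ih2 ⟨(a,b),hab⟩ ⟨(c,b),hcb⟩, ih2 ⟨(a,b),hab⟩ ⟨(c,a),h2⟩,
                ih3 c a b h2 hab, ih2 ⟨(c,a),h2⟩ ⟨(c,b),hcb⟩]
              simp only [map_smul, map_sub, map_add, smul_sub, smul_add, sg_sg]
              abel
            · -- 5b : c = a, r = p
              subst h2
              rw [Mo_Cw_eq_gt hab, map_smul, map_sub, Mo_Cw_same₀, Mo_Cw_same₀,
                Mo_Cw_eq_lt hab, ih1 ⟨(c,b),hab⟩]
              simp
            · rcases lt_trichotomy c b with h3 | h3 | h3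
              · -- 5d : a < c < b
                rw [Mo_Cw_eq_gt h3, map_smul, map_sub, Mo_Cw_eq_lt h2, Mo_Cw_eq_lt hab,
                  Mo_Cw_eq_lt h2, map_sub, Mo_Cw_eq_gt hab, Mo_Cw_eq_gt h3,
                  ih2 ⟨(c,b),h3⟩ ⟨(a,c),h2⟩, ih2 ⟨(a,b),hab⟩ ⟨(a,c),h2⟩,
                  ih3 a c b h2 h3, ih2 ⟨(a,b),hab⟩ ⟨(c,b),h3⟩]
                simp only [map_smul, map_sub, map_add, smul_sub, smul_add, sg_sg]
                abel
              · -- 5a : c = b, r = q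
                subst h3
                rw [Mo_Cw_same₀, map_zero, Mo_Cw_eq_lt hab, map_sub, Mo_Cw_eq_gt hab,
                  Mo_Cw_same₀, ih1 ⟨(a,c),hab⟩]
                simp
              · -- 5e : a < b < c
                have hac : a < c := hab.trans h3
                rw [Mo_Cw_eq_lt h3, map_sub, Mo_Cw_eq_lt hab, Mo_Cw_eq_lt hac,
                  Mo_Cw_eq_lt hac, map_sub, Mo_Cw_eq_gt hab, Mo_Cw_eq_lt h3,
                  ih3 a b c hab h3, ih2 ⟨(b,c),h3⟩ ⟨(a,c),hac⟩]
                simp only [map_smul, map_sub, map_add, smul_sub, smul_add, sg_sg]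
                abel
        · -- i < i0
          rcases hpq with h | ⟨rfl, hab⟩
          · rcases lt_trichotomy k i0 with hk | hk | hk
            · -- K1 : i < k < i0
              rw [Mo_Cw_lt hk, Mo_Cw_lt h, Mo_Cw_lt (h.trans hk), Mo_Cw_gt h,
                Mo_Cw_lt hk, sg_sg]
            · -- K2 : i < k = i0
              subst hk
              rcases lt_trichotomy b c with h2 | h2 | h2
              · rw [Mo_Cw_eq_lt h2, map_sub, Mo_Cw_lt h, Mo_Cw_lt h, Mo_Cw_lt h,
                  Mo_Cw_gt h, Mo_Cw_eq_lt h2]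
                simp only [map_smul, map_sub, smul_sub, sg_sg]
              · subst h2
                rw [Mo_Cw_same₀, map_zero, Mo_Cw_lt h, Mo_Cw_gt h, Mo_Cw_same₀]
                simp
              · rw [Mo_Cw_eq_gt h2, map_smul, map_sub, Mo_Cw_lt h, Mo_Cw_lt h,
                  Mo_Cw_lt h, Mo_Cw_gt h, Mo_Cw_eq_gt h2]
                simp only [map_smul, map_sub, smul_sub, sg_sg]
            · -- K3 : i < i0 < k
              rw [Mo_Cw_gt hk, map_smul, Mo_Cw_lt hx, Mo_Cw_lt hx, Mo_Cw_gt h,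
                Mo_Cw_gt hk]
              simp only [map_smul, sg_sg]
          · -- K1eq : i = k < i0, a < b
            rw [Mo_Cw_lt hx, Mo_Cw_eq_lt hab, Mo_Cw_lt hx, Mo_Cw_eq_gt hab, sg_sg]
      intro p q
      rcases eq_or_ne p q with rfl | hne
      · rw [A1 p, smul_zero]
      obtain ⟨⟨i,a⟩,hia⟩ := p; obtain ⟨⟨k,b⟩,hkb⟩ := q
      rcases lt_trichotomy i k with h | h | h
      · exact key i a k b hia hkb (Or.inl h)
      · subst h
        rcases lt_trichotomy a b with h2 | h2 | h2
        · exact key i a i b hia hkb (Or.inr ⟨rfl, h2⟩)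
        · exact absurd (by subst h2; rfl) hne
        · rw [key i b i a hkb hia (Or.inr ⟨rfl, h2⟩), sg_sg]
      · rw [key k b i a hkb hia (Or.inl h), sg_sg]
    refine ⟨A1, A2, ?_⟩
    intro i j k hij hjk
    rcases lt_trichotomy i0 i with hx | hx | hx
    · -- i0 < i : pass-through
      simp only [Mo_Cw_gt (hx.trans hij), Mo_Cw_gt hx, map_smul, sg_sg]
      rw [ih3 i j k hij hjk, map_add]
    · -- i0 = i : interacting case
      subst hx
      rcases lt_trichotomy c j with hcj | hcj | hcj
      · -- (c) : i0 < c < j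
        have hck : c < k := hcj.trans hjk
        simp only [Mo_Cw_gt hij, map_smul, Mo_Cw_eq_gt hcj, Mo_Cw_eq_gt hck,
          Mo_Cw_eq_lt hjk, map_sub, smul_sub, sg_sg]
        rw [ih3 c j k hcj hjk, ih2 ⟨(j,k),hjk⟩ ⟨(c,k),hck⟩]
        simp only [map_add, map_smul, smul_add, smul_sub, sg_sg]
        abel
      · -- (a) : c = j
        subst hcj
        simp [Mo_Cw_gt hij, Mo_Cw_same₀, Mo_Cw_eq_gt hjk, Mo_Cw_eq_lt hjk,
          ih1 ⟨(c,k),hjk⟩, sg_sg]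
      · rcases lt_trichotomy c k with hck | hck | hck
        · -- (d) : j < c < k
          simp only [Mo_Cw_gt hij, map_smul, Mo_Cw_eq_lt hcj, Mo_Cw_eq_gt hck,
            Mo_Cw_eq_lt hjk, map_sub, smul_sub, sg_sg]
          rw [ih2 ⟨(c,k),hck⟩ ⟨(j,k),hjk⟩, ih3 j c k hcj hck]
          simp only [map_add, map_smul, smul_add, smul_sub, sg_sg]
          abel
        · -- (b) : c = k
          subst hck
          simp only [Mo_Cw_gt hij, map_smul, Mo_Cw_eq_lt hjk, Mo_Cw_same₀,
            map_sub, smul_sub, map_zero, smul_zero, ih1 ⟨(j,c),hjk⟩, sub_zero,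
            zero_sub, neg_zero, add_zero, zero_add]
        · -- (e) : j < k < c
          simp only [Mo_Cw_gt hij, map_smul, Mo_Cw_eq_lt hcj, Mo_Cw_eq_lt hck,
            Mo_Cw_eq_lt hjk, map_sub, smul_sub, sg_sg]
          rw [ih2 ⟨(j,c),hcj⟩ ⟨(j,k),hjk⟩, ih2 ⟨(k,c),hck⟩ ⟨(j,k),hjk⟩,
            ih3 j k c hjk hck]
          simp only [map_add, map_smul, smul_add, smul_sub, sg_sg]
          abel
    · -- i < i0
      rcases lt_trichotomy i0 j with hj | hj | hj
      · -- i < i0 < j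
        simp only [Mo_Cw_gt hj, map_smul, Mo_Cw_lt hx, Mo_Cw_eq_lt hjk, map_sub,
          smul_sub]
        abel
      · -- i0 = j
        subst hj
        rcases lt_trichotomy c k with hck | hck | hck
        · -- (β) : c < k
          simp only [Mo_Cw_eq_gt hck, map_smul, map_sub, Mo_Cw_lt hx,
            Mo_Cw_eq_lt hjk, smul_sub, sg_sg]
          abel
        · -- (α) : c = k
          subst hck
          simp [Mo_Cw_same₀, Mo_Cw_lt hx, Mo_Cw_eq_lt hjk, sg_sg]
        · -- (γ) : k < c
          simp only [Mo_Cw_eq_lt hck, map_sub, Mo_Cw_lt hx, Mo_Cw_eq_lt hjk]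
          abel
      · -- j < i0
        simp only [Mo_Cw_lt hj, Mo_Cw_lt hij, Mo_Cw_lt hx, Mo_Cw_eq_lt hjk, map_sub]
        abel

end PBWScratch

namespace PBWScratch
variable {m d : ℕ}

lemma adm_nil : AdmissibleWord m [] := List.Pairwise.nil

lemma adm_cons {p : OrdIdx m} {l : List (OrdIdx m)} :
    AdmissibleWord m (p :: l) ↔ (∀ u ∈ l, p.1.1 < u.1.1) ∧ AdmissibleWord m l := by
  simp [AdmissibleWord, List.pairwise_cons]

lemma Tp_adm {p : OrdIdx m} {l : List (OrdIdx m)} (h : AdmissibleWord m (p :: l)) :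
    Tp d p l = Finsupp.single (p :: l) 1 := by
  cases l with
  | nil => rfl
  | cons q t => exact Tp_cons_lt ((adm_cons.mp h).1 q (by simp)) t

lemma support_Cw {q : OrdIdx m} {f : Fw m} {w : List (OrdIdx m)}
    (h : w ∈ (Cw q f).support) : ∃ w' ∈ f.support, w = q :: w' := by
  classical
  simp only [Cw, Finsupp.lmapDomain_apply] at h
  have := Finsupp.mapDomain_support h
  obtain ⟨w', hw', rfl⟩ := Finset.mem_image.mp this
  exact ⟨w', hw', rfl⟩

lemma Tp_supp : ∀ (l : List (OrdIdx m)), AdmissibleWord m l → ∀ (p : OrdIdx m),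
    ∀ w ∈ (Tp d p l).support,
      AdmissibleWord m w ∧
        ∀ e : Fin m, e < p.1.1 → (∀ u ∈ l, e < u.1.1) → (∀ u ∈ w, e < u.1.1) := by
  classical
  intro l
  induction l with
  | nil =>
    intro _ p w hw
    have hw' : w = [p] := by
      have := Finsupp.support_single_subset (Tp_nil (d := d) p ▸ hw)
      simpa using this
    subst hw'
    refine ⟨by simp [AdmissibleWord], ?_⟩
    intro e he _ u hu
    simp at hu; subst hu; exact he
  | cons q t iht =>
    intro hl p w hw
    have hqt : ∀ u ∈ t, q.1.1 < u.1.1 := (adm_cons.mp hl).1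
    have hlt : AdmissibleWord m t := (adm_cons.mp hl).2
    rcases lt_trichotomy p.1.1 q.1.1 with h1 | h1 | h1
    · rw [Tp_cons_lt h1] at hw
      have hw' : w = p :: q :: t := by
        have := Finsupp.support_single_subset hw
        simpa using this
      subst hw'
      constructor
      · rw [adm_cons]
        exact ⟨fun u hu => by
          rcases List.mem_cons.mp hu with rfl | hu
          exacts [h1, h1.trans (hqt u hu)], hl⟩
      · intro e he hb v hv
        rcases List.mem_cons.mp hv with rfl | hv
        exacts [he, hb v hv]
    · rcases lt_trichotomy p.1.2 q.1.2 with h2 | h2 | h2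
      · rw [Tp_cons_eq_lt h1 h2] at hw
        have := Finset.mem_union.mp (Finsupp.support_sub hw)
        have hcase : (∃ w' ∈ (Tp d ⟨(p.1.2, q.1.2), h2⟩ t).support, w = p :: w')
            ∨ (∃ w' ∈ (Tp d ⟨(p.1.2, q.1.2), h2⟩ t).support, w = q :: w') := by
          rcases this with h | h
          · exact Or.inl (support_Cw h)
          · exact Or.inr (support_Cw h)
        have base : ∀ x : OrdIdx m, x.1.1 = p.1.1 →
            (∃ w' ∈ (Tp d ⟨(p.1.2, q.1.2), h2⟩ t).support, w = x :: w') →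
            AdmissibleWord m w ∧
              ∀ e : Fin m, e < p.1.1 → (∀ u ∈ q :: t, e < u.1.1) →
                ∀ u ∈ w, e < u.1.1 := by
          rintro x hx ⟨w', hw', rfl⟩
          obtain ⟨ha, hB⟩ := iht hlt _ w' hw'
          constructor
          · rw [adm_cons]
            refine ⟨fun u hu => ?_, ha⟩
            rw [hx]
            exact hB p.1.1 p.2 (fun v hv => h1 ▸ hqt v hv) u hu
          · intro e he hb v hv
            rcases List.mem_cons.mp hv with rfl | hv
            · rw [hx]; exact he
            · exact hB e (he.trans p.2) (fun u hu => hb u (List.mem_cons_of_mem _ hu)) v hv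
        rcases hcase with h | h
        exacts [base p rfl h, base q h1.symm h]
      · rw [Tp_cons_same h1 h2] at hw
        simp at hw
      · rw [Tp_cons_eq_gt h1 h2] at hw
        have hw2 := Finsupp.support_smul hw
        have := Finset.mem_union.mp (Finsupp.support_sub hw2)
        have hcase : (∃ w' ∈ (Tp d ⟨(q.1.2, p.1.2), h2⟩ t).support, w = p :: w')
            ∨ (∃ w' ∈ (Tp d ⟨(q.1.2, p.1.2), h2⟩ t).support, w = q :: w') := by
          rcases this with h | h
          · exact Or.inr (support_Cw h)
          · exact Or.inl (support_Cw h)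
        have hq2 : p.1.1 < q.1.2 := h1 ▸ q.2
        have base : ∀ x : OrdIdx m, x.1.1 = p.1.1 →
            (∃ w' ∈ (Tp d ⟨(q.1.2, p.1.2), h2⟩ t).support, w = x :: w') →
            AdmissibleWord m w ∧
              ∀ e : Fin m, e < p.1.1 → (∀ u ∈ q :: t, e < u.1.1) →
                ∀ u ∈ w, e < u.1.1 := by
          rintro x hx ⟨w', hw', rfl⟩
          obtain ⟨ha, hB⟩ := iht hlt _ w' hw'
          constructor
          · rw [adm_cons]
            refine ⟨fun u hu => ?_, ha⟩
            rw [hx]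
            exact hB p.1.1 hq2 (fun v hv => h1 ▸ hqt v hv) u hu
          · intro e he hb v hv
            rcases List.mem_cons.mp hv with rfl | hv
            · rw [hx]; exact he
            · exact hB e (he.trans hq2) (fun u hu => hb u (List.mem_cons_of_mem _ hu)) v hv
        rcases hcase with h | h
        exacts [base p rfl h, base q h1.symm h]
    · rw [Tp_cons_gt h1] at hw
      obtain ⟨w', hw', rfl⟩ := support_Cw (Finsupp.support_smul hw)
      obtain ⟨ha, hB⟩ := iht hlt p w' hw'
      constructor
      · rw [adm_cons]
        exact ⟨fun u hu => hB q.1.1 h1 hqt u hu, ha⟩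
      · intro e he hb v hv
        rcases List.mem_cons.mp hv with rfl | hv
        · exact hb v (by simp)
        · exact hB e he (fun u hu => hb u (List.mem_cons_of_mem _ hu)) v hv

end PBWScratch

namespace PBWScratch
variable {m d : ℕ}

lemma Tp_cons_eqlt {i a b : Fin m} {hia : i < a} {hib : i < b} (hab : a < b)
    (t : List (OrdIdx m)) :
    Tp d ⟨(i,a),hia⟩ (⟨(i,b),hib⟩ :: t)
      = Cw (⟨(i,a),hia⟩ : OrdIdx m) (Tp d ⟨(a,b),hab⟩ t)
        - Cw (⟨(i,b),hib⟩ : OrdIdx m) (Tp d ⟨(a,b),hab⟩ t) :=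
  Tp_cons_eq_lt (p := ⟨(i,a),hia⟩) (q := ⟨(i,b),hib⟩) rfl hab t

lemma Tp_cons_eqgt {i a b : Fin m} {hia : i < a} {hib : i < b} (hba : b < a)
    (t : List (OrdIdx m)) :
    Tp d ⟨(i,a),hia⟩ (⟨(i,b),hib⟩ :: t)
      = sg d • (Cw (⟨(i,b),hib⟩ : OrdIdx m) (Tp d ⟨(b,a),hba⟩ t)
        - Cw (⟨(i,a),hia⟩ : OrdIdx m) (Tp d ⟨(b,a),hba⟩ t)) :=
  Tp_cons_eq_gt (p := ⟨(i,a),hia⟩) (q := ⟨(i,b),hib⟩) rfl hba t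

lemma Pr_nil : pbwWordProd m d [] = 1 := rfl

lemma Pr_cons (p : OrdIdx m) (l : List (OrdIdx m)) :
    pbwWordProd m d (p :: l) = pbwGen m d p * pbwWordProd m d l := by
  simp [pbwWordProd]

lemma gen_sq (p : OrdIdx m) : pbwGen m d p * pbwGen m d p = 0 := by
  have := RingQuot.mkAlgHom_rel ℝ (PBWRel.sq (m := m) (d := d) p)
  simpa [pbwGen, map_mul] using this

lemma gen_comm {p q : OrdIdx m} (h : p ≠ q) :
    pbwGen m d p * pbwGen m d q = sg d • (pbwGen m d q * pbwGen m d p) := by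
  have := RingQuot.mkAlgHom_rel ℝ (PBWRel.comm (m := m) (d := d) p q h)
  simpa [pbwGen, map_mul, map_smul, sg] using this

lemma gen_three (i j k : Fin m) (hij : i < j) (hjk : j < k) :
    pbwGen m d ⟨(i,j),hij⟩ * pbwGen m d ⟨(j,k),hjk⟩
      = pbwGen m d ⟨(i,k),hij.trans hjk⟩ * pbwGen m d ⟨(j,k),hjk⟩
        + pbwGen m d ⟨(i,j),hij⟩ * pbwGen m d ⟨(i,k),hij.trans hjk⟩ := by
  have := RingQuot.mkAlgHom_rel ℝ (PBWRel.threeTerm (m := m) (d := d) i j k hij hjk)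
  rw [map_sub, map_sub, map_mul, map_mul, map_mul, map_zero, sub_sub, sub_eq_zero] at this
  exact this

/-- evaluation of formal words to actual products -/
def ψ (m d : ℕ) : Fw m →ₗ[ℝ] PBWAlg m d :=
  Finsupp.lsum ℝ fun l => LinearMap.toSpanSingleton ℝ (PBWAlg m d) (pbwWordProd m d l)

@[simp] lemma ψ_single (l : List (OrdIdx m)) (c : ℝ) :
    ψ m d (Finsupp.single l c) = c • pbwWordProd m d l := by
  simp [ψ, LinearMap.toSpanSingleton]

lemma ψ_Cw (q : OrdIdx m) (f : Fw m) :
    ψ m d (Cw q f) = pbwGen m d q * ψ m d f := by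
  induction f using Finsupp.induction_linear with
  | zero => simp
  | add f g hf hg => simp [map_add, hf, hg, mul_add]
  | single l c => rw [Cw_single, ψ_single, ψ_single, Pr_cons, mul_smul_comm]

lemma ψ_Tp : ∀ (l : List (OrdIdx m)), AdmissibleWord m l → ∀ p : OrdIdx m,
    ψ m d (Tp d p l) = pbwGen m d p * pbwWordProd m d l := by
  intro l
  induction l with
  | nil => intro _ p; rw [Tp_nil, ψ_single, Pr_cons, Pr_nil, one_smul]
  | cons q t iht =>
    intro hl p
    have hlt : AdmissibleWord m t := (adm_cons.mp hl).2
    obtain ⟨⟨qi, qb⟩, hq⟩ := q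
    obtain ⟨⟨pi, pa⟩, hp⟩ := p
    rcases lt_trichotomy pi qi with h1 | h1 | h1
    · rw [Tp_cons_lt h1, ψ_single, one_smul, Pr_cons]
    · subst h1
      rcases lt_trichotomy pa qb with h2 | h2 | h2
      · have hC := eq_sub_of_add_eq' (gen_three (d := d) pi pa qb hp h2).symm
        rw [Tp_cons_eqlt h2, map_sub, ψ_Cw, ψ_Cw, iht hlt, Pr_cons]
        conv_rhs => rw [← mul_assoc, hC, sub_mul, mul_assoc, mul_assoc]
      · have : (⟨(pi,pa),hp⟩ : OrdIdx m) = ⟨(pi,qb),hq⟩ := by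
          simp [h2]
        rw [this, Tp_cons_same rfl rfl, map_zero, Pr_cons, ← mul_assoc, gen_sq,
          zero_mul]
      · have hC := eq_sub_of_add_eq' (gen_three (d := d) pi qb pa hq h2).symm
        rw [Tp_cons_eqgt h2, map_smul, map_sub, ψ_Cw, ψ_Cw, iht hlt, Pr_cons]
        conv_rhs => rw [← mul_assoc,
          gen_comm (show (⟨(pi,pa),hp⟩ : OrdIdx m) ≠ ⟨(pi,qb),hq⟩ from
            fun e => h2.ne' (congrArg (fun x => x.1.2) e)),
          hC, smul_mul_assoc, sub_mul, mul_assoc, mul_assoc]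
    · rw [Tp_cons_gt h1, map_smul, ψ_Cw, iht hlt, Pr_cons]
      conv_rhs => rw [← mul_assoc,
        gen_comm (show (⟨(pi,pa),hp⟩ : OrdIdx m) ≠ ⟨(qi,qb),hq⟩ from
          fun e => h1.ne' (congrArg (fun x => x.1.1) e)),
        smul_mul_assoc, mul_assoc]

end PBWScratch

namespace PBWScratch
variable {m d : ℕ}

lemma ψ_mem (f : Fw m) (hf : ∀ w ∈ f.support, AdmissibleWord m w) :
    ψ m d f ∈ Submodule.span ℝ
      (Set.range fun w : {l : List (OrdIdx m) // AdmissibleWord m l} =>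
        pbwWordProd m d w.1) := by
  rw [ψ, Finsupp.lsum_apply]
  apply Submodule.sum_mem
  intro w hw
  exact Submodule.smul_mem _ _ (Submodule.subset_span ⟨⟨w, hf w hw⟩, rfl⟩)

lemma mul_mem_span (x : PBWAlg m d) :
    ∀ y ∈ Submodule.span ℝ
      (Set.range fun w : {l : List (OrdIdx m) // AdmissibleWord m l} =>
        pbwWordProd m d w.1), x * y ∈ Submodule.span ℝ
      (Set.range fun w : {l : List (OrdIdx m) // AdmissibleWord m l} =>
        pbwWordProd m d w.1) := by
  set P := Submodule.span ℝ
      (Set.range fun w : {l : List (OrdIdx m) // AdmissibleWord m l} =>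
        pbwWordProd m d w.1) with hP
  obtain ⟨z, rfl⟩ := RingQuot.mkAlgHom_surjective ℝ (PBWRel m d) x
  induction z using FreeAlgebra.induction with
  | grade0 r =>
    intro y hy
    rw [AlgHom.commutes, ← Algebra.smul_def]
    exact Submodule.smul_mem _ _ hy
  | grade1 p =>
    intro y hy
    refine Submodule.span_induction (p := fun y _ => pbwGen m d p * y ∈ P)
      ?_ ?_ ?_ ?_ hy
    · rintro v ⟨⟨w, hw⟩, rfl⟩
      rw [← ψ_Tp w hw p]
      exact ψ_mem _ (fun v hv => (Tp_supp w hw p v hv).1)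
    · show pbwGen m d p * 0 ∈ P
      rw [mul_zero]; exact zero_mem _
    · intro a b _ _ ha hb
      show pbwGen m d p * (a + b) ∈ P
      rw [mul_add]; exact add_mem ha hb
    · intro c a _ ha
      show pbwGen m d p * (c • a) ∈ P
      rw [mul_smul_comm]; exact Submodule.smul_mem _ _ ha
  | mul a b ha hb =>
    intro y hy
    rw [map_mul, mul_assoc]
    exact ha _ (hb y hy)
  | add a b ha hb =>
    intro y hy
    rw [map_add, add_mul]
    exact add_mem (ha y hy) (hb y hy)

lemma span_adm_top :
    ⊤ ≤ Submodule.span ℝ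
      (Set.range fun w : {l : List (OrdIdx m) // AdmissibleWord m l} =>
        pbwWordProd m d w.1) := by
  intro x _
  have h1 : (1 : PBWAlg m d) ∈ Submodule.span ℝ
      (Set.range fun w : {l : List (OrdIdx m) // AdmissibleWord m l} =>
        pbwWordProd m d w.1) := by
    have h2 : pbwWordProd m d [] ∈ Submodule.span ℝ
        (Set.range fun w : {l : List (OrdIdx m) // AdmissibleWord m l} =>
          pbwWordProd m d w.1) := Submodule.subset_span ⟨⟨[], adm_nil⟩, rfl⟩
    rwa [Pr_nil] at h2
  have := mul_mem_span x 1 h1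
  rwa [mul_one] at this

def repF (m d : ℕ) : FreeAlgebra ℝ (OrdIdx m) →ₐ[ℝ] Module.End ℝ (Fw m) :=
  FreeAlgebra.lift ℝ (Mo d)

lemma single_eq_smul (l : List (OrdIdx m)) (c : ℝ) :
    (Finsupp.single l c : Fw m) = c • Finsupp.single l 1 := by
  rw [Finsupp.smul_single, smul_eq_mul, mul_one]

lemma repF_rel : ∀ ⦃x y⦄, PBWRel m d x y → repF m d x = repF m d y := by
  intro x y h
  cases h with
  | sq p =>
    rw [map_mul, map_zero, repF, FreeAlgebra.lift_ι_apply]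
    apply LinearMap.ext
    intro f
    rw [Module.End.mul_apply, LinearMap.zero_apply]
    induction f using Finsupp.induction_linear with
    | zero => simp
    | add f g hf hg => rw [map_add, map_add, hf, hg, add_zero]
    | single l c =>
      rw [single_eq_smul, map_smul, map_smul, (idents l).1 p, smul_zero]
  | comm p q hne =>
    rw [map_mul, map_smul, map_mul, repF, FreeAlgebra.lift_ι_apply,
      FreeAlgebra.lift_ι_apply]
    apply LinearMap.ext
    intro f
    rw [Module.End.mul_apply, LinearMap.smul_apply, Module.End.mul_apply]
    induction f using Finsupp.induction_linear with
    | zero => simp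
    | add f g hf hg => rw [map_add, map_add, map_add, map_add, hf, hg, smul_add]
    | single l c =>
      rw [single_eq_smul, map_smul, map_smul, map_smul, map_smul,
        (idents l).2.1 p q, smul_comm]
      rfl
  | threeTerm i j k hij hjk =>
    rw [map_sub, map_sub, map_mul, map_mul, map_mul, map_zero, repF,
      FreeAlgebra.lift_ι_apply, FreeAlgebra.lift_ι_apply, FreeAlgebra.lift_ι_apply]
    apply LinearMap.ext
    intro f
    rw [LinearMap.zero_apply, LinearMap.sub_apply, LinearMap.sub_apply,
      Module.End.mul_apply, Module.End.mul_apply, Module.End.mul_apply]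
    induction f using Finsupp.induction_linear with
    | zero => simp
    | add f g hf hg =>
      simp only [map_add]
      rw [sub_sub, sub_eq_zero] at hf hg ⊢
      rw [hf, hg]
      abel
    | single l c =>
      rw [single_eq_smul]
      simp only [map_smul]
      rw [(idents l).2.2 i j k hij hjk, smul_add]
      abel

def rep (m d : ℕ) : PBWAlg m d →ₐ[ℝ] Module.End ℝ (Fw m) :=
  RingQuot.liftAlgHom ℝ ⟨repF m d, repF_rel⟩

lemma rep_gen (p : OrdIdx m) : rep m d (pbwGen m d p) = Mo d p := by
  rw [pbwGen, rep, RingQuot.liftAlgHom_mkAlgHom_apply, repF, FreeAlgebra.lift_ι_apply]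

def φl (m d : ℕ) : PBWAlg m d →ₗ[ℝ] Fw m :=
  (LinearMap.applyₗ (Finsupp.single [] (1:ℝ))).comp (AlgHom.toLinearMap (rep m d))

lemma φl_Pr : ∀ l : List (OrdIdx m), AdmissibleWord m l →
    φl m d (pbwWordProd m d l) = Finsupp.single l 1 := by
  intro l
  induction l with
  | nil =>
    intro _
    show rep m d (pbwWordProd m d []) (Finsupp.single [] 1) = _
    rw [Pr_nil, map_one, Module.End.one_apply]
  | cons p t ih =>
    intro hl
    show rep m d (pbwWordProd m d (p :: t)) (Finsupp.single [] 1) = _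
    rw [Pr_cons, map_mul, Module.End.mul_apply, rep_gen]
    have : rep m d (pbwWordProd m d t) (Finsupp.single [] 1) = Finsupp.single t 1 :=
      ih (adm_cons.mp hl).2
    rw [this, Mo_single, one_smul, Tp_adm hl]

end PBWScratch


/-- The admissible monomials form a linear basis of the presented algebra. -/
theorem pbw_basis (m d : ℕ) (hd : 1 ≤ d) :
    ∃ b : Module.Basis {l : List (OrdIdx m) // AdmissibleWord m l} ℝ (PBWAlg m d),
      ∀ w : {l : List (OrdIdx m) // AdmissibleWord m l}, b w = pbwWordProd m d w.1 := by
  classical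
  have h0 : LinearIndependent ℝ
      (fun w : {l : List (OrdIdx m) // AdmissibleWord m l} =>
        (Finsupp.single w.1 1 : PBWScratch.Fw m)) := by
    have hb := (Finsupp.basisSingleOne (R := ℝ)
      (ι := List (OrdIdx m))).linearIndependent
    have h2 := hb.comp
      (Subtype.val : {l : List (OrdIdx m) // AdmissibleWord m l} → List (OrdIdx m))
      Subtype.val_injective
    simpa [Function.comp_def, Finsupp.coe_basisSingleOne] using h2
  have hli : LinearIndependent ℝ
      (fun w : {l : List (OrdIdx m) // AdmissibleWord m l} => pbwWordProd m d w.1) := by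
    apply LinearIndependent.of_comp (PBWScratch.φl m d)
    have he : (⇑(PBWScratch.φl m d) ∘
        fun w : {l : List (OrdIdx m) // AdmissibleWord m l} => pbwWordProd m d w.1)
        = fun w : {l : List (OrdIdx m) // AdmissibleWord m l} =>
          (Finsupp.single w.1 1 : PBWScratch.Fw m) :=
      funext fun w => PBWScratch.φl_Pr w.1 w.2
    rw [he]; exact h0
  refine ⟨Module.Basis.mk hli PBWScratch.span_adm_top, fun w => ?_⟩
  rw [Module.Basis.mk_apply]

end
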